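/- Let D be an affine resolvable 2-(qⁿ, q^{n−1}, (q^{n−1}−1)/(q−1)) design with a good block B, q = p^t ≥ 4, p prime, n ≥ 2. If the residual design D_B is linearly embeddable over GF(p), then the GF(p)-code spanned by the rows of the incidence matrix M'' of the substructure D'' of D_B (blocks of size q^{n−1} − q^{n−2}) contains at least (p−1)·C(q^{n−1}, 2) codewords of weight 2q^{n−1} whose supports are unions of parallel classes of the resolution R of D'' defined by B. -/

import Mathlib

open Finset

namespace ResEmb

variable {v b r : ℕ} {B : Fin b → Finset (Fin v)} {res : Fin b → Fin r}

lemma filter_class_eq (hres : ∀ (c : Fin r) (x : Fin v), ∃! j, res j = c ∧ x ∈ B j)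
    (c : Fin r) (x : Fin v) :
    ∃ j₀, res j₀ = c ∧ x ∈ B j₀ ∧
      (Finset.univ.filter fun j => res j = c ∧ x ∈ B j) = {j₀} := by
  obtain ⟨j₀, hj₀, hu⟩ := hres c x
  refine ⟨j₀, hj₀.1, hj₀.2, Finset.ext fun j => ?_⟩
  simp only [Finset.mem_filter, Finset.mem_univ, true_and, Finset.mem_singleton]
  exact ⟨fun h => hu j h, fun h => h ▸ hj₀⟩

lemma unique_block (hres : ∀ (c : Fin r) (x : Fin v), ∃! j, res j = c ∧ x ∈ B j)
    {x : Fin v} {j j' : Fin b} (h : res j = res j') (hx : x ∈ B j) (hx' : x ∈ B j') :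
    j = j' := by
  obtain ⟨j₀, hj₀, hu⟩ := hres (res j') x
  exact (hu j ⟨h, hx⟩).trans (hu j' ⟨rfl, hx'⟩).symm

lemma blocks_through (hres : ∀ (c : Fin r) (x : Fin v), ∃! j, res j = c ∧ x ∈ B j)
    (x : Fin v) : (Finset.univ.filter fun j => x ∈ B j).card = r := by
  classical
  rw [Finset.card_eq_sum_card_fiberwise (f := res) (t := Finset.univ)
    (fun _ _ => Finset.mem_univ _)]
  have : ∀ c : Fin r, ((Finset.univ.filter fun j => x ∈ B j).filter
      fun j => res j = c).card = 1 := by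
    intro c
    obtain ⟨j₀, h1, h2, hset⟩ := filter_class_eq hres c x
    rw [Finset.filter_filter]
    have : (Finset.univ.filter fun j => x ∈ B j ∧ res j = c)
        = (Finset.univ.filter fun j => res j = c ∧ x ∈ B j) := by
      apply Finset.filter_congr; intro j _; exact and_comm
    rw [this, hset, Finset.card_singleton]
  simp only [this]
  simp

lemma card_through_nonpar (hres : ∀ (c : Fin r) (x : Fin v), ∃! j, res j = c ∧ x ∈ B j)
    {b0 : Fin b} {u : Fin v} (hu : u ∈ B b0) :
    (Finset.univ.filter fun j => u ∈ B j ∧ res j ≠ res b0).card = r - 1 := by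
  classical
  have hsplit := Finset.card_filter_add_card_filter_not
    (s := Finset.univ.filter fun j => u ∈ B j) (p := fun j => res j = res b0)
  have h1 : ((Finset.univ.filter fun j => u ∈ B j).filter
      fun j => res j = res b0) = {b0} := by
    ext j
    simp only [Finset.mem_filter, Finset.mem_univ, true_and, Finset.mem_singleton]
    constructor
    · rintro ⟨hj, hc⟩; exact unique_block hres hc hj hu
    · rintro rfl; exact ⟨hu, rfl⟩
  have h2 : ((Finset.univ.filter fun j => u ∈ B j).filter
      fun j => ¬ res j = res b0) = Finset.univ.filter fun j => u ∈ B j ∧ res j ≠ res b0 := by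
    rw [Finset.filter_filter]
  rw [h1, h2, blocks_through hres u, Finset.card_singleton] at hsplit
  omega

lemma card_pair_nonpar {lam : ℕ}
    (hpair : ∀ x y : Fin v, x ≠ y →
      (Finset.univ.filter fun j => x ∈ B j ∧ y ∈ B j).card = lam)
    (hres : ∀ (c : Fin r) (x : Fin v), ∃! j, res j = c ∧ x ∈ B j)
    {b0 : Fin b} {u w : Fin v} (huw : u ≠ w) (hu : u ∈ B b0) (hw : w ∈ B b0) :
    (Finset.univ.filter fun j => (u ∈ B j ∧ w ∈ B j) ∧ res j ≠ res b0).card = lam - 1 := by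
  classical
  have hsplit := Finset.card_filter_add_card_filter_not
    (s := Finset.univ.filter fun j => u ∈ B j ∧ w ∈ B j) (p := fun j => res j = res b0)
  have h1 : ((Finset.univ.filter fun j => u ∈ B j ∧ w ∈ B j).filter
      fun j => res j = res b0) = {b0} := by
    ext j
    simp only [Finset.mem_filter, Finset.mem_univ, true_and, Finset.mem_singleton]
    constructor
    · rintro ⟨hj, hc⟩; exact unique_block hres hc hj.1 hu
    · rintro rfl; exact ⟨⟨hu, hw⟩, rfl⟩
  have h2 : ((Finset.univ.filter fun j => u ∈ B j ∧ w ∈ B j).filter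
      fun j => ¬ res j = res b0)
      = Finset.univ.filter fun j => (u ∈ B j ∧ w ∈ B j) ∧ res j ≠ res b0 := by
    rw [Finset.filter_filter]
  rw [h1, h2, hpair u w huw, Finset.card_singleton] at hsplit
  omega


lemma r_identity {q n lam b r : ℕ} (hq4 : 4 ≤ q) (hn : 2 ≤ n)
    (B : Fin b → Finset (Fin (q ^ n)))
    (hsize : ∀ j, (B j).card = q ^ (n - 1))
    (hlam : lam * (q - 1) = q ^ (n - 1) - 1)
    (hpair : ∀ x y : Fin (q ^ n), x ≠ y →
      (Finset.univ.filter fun j => x ∈ B j ∧ y ∈ B j).card = lam)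
    (res : Fin b → Fin r)
    (hres : ∀ (c : Fin r) (x : Fin (q ^ n)), ∃! j, res j = c ∧ x ∈ B j) :
    r = lam + q ^ (n - 1) := by
  classical
  have hq0 : 0 < q := by omega
  have hv1 : 0 < q ^ n := pow_pos hq0 n
  have hk : q ≤ q ^ (n - 1) := Nat.le_self_pow (by omega) q
  have hkv : q ^ (n - 1) * q = q ^ n := by
    rw [← pow_succ, Nat.sub_add_cancel (by omega)]
  obtain ⟨x⟩ : Nonempty (Fin (q ^ n)) := ⟨⟨0, hv1⟩⟩
  have hvn : q ^ (n - 1) ≤ q ^ n := Nat.pow_le_pow_right (by omega) (by omega)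
  have key1 : ∀ j : Fin b,
      (∑ y : Fin (q ^ n), if x ∈ B j ∧ y ∈ B j ∧ y ≠ x then (1 : ℕ) else 0)
      = if x ∈ B j then q ^ (n - 1) - 1 else 0 := by
    intro j
    by_cases hx : x ∈ B j
    · rw [if_pos hx]
      simp only [hx, true_and]
      rw [← Finset.card_filter]
      have : (Finset.univ.filter fun y => y ∈ B j ∧ y ≠ x) = (B j).erase x := by
        ext y; simp [Finset.mem_erase, and_comm]
      rw [this, Finset.card_erase_of_mem hx, hsize j]
    · simp [hx]
  have key2 : ∀ y : Fin (q ^ n),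
      (∑ j : Fin b, if x ∈ B j ∧ y ∈ B j ∧ y ≠ x then (1 : ℕ) else 0)
      = if y ≠ x then lam else 0 := by
    intro y
    by_cases hy : y ≠ x
    · rw [if_pos hy]
      rw [← Finset.card_filter]
      have : (Finset.univ.filter fun j => x ∈ B j ∧ y ∈ B j ∧ y ≠ x)
          = (Finset.univ.filter fun j => x ∈ B j ∧ y ∈ B j) := by
        apply Finset.filter_congr; intro j _; simp [hy]
      rw [this, hpair x y (Ne.symm hy)]
    · rw [if_neg hy]
      have hyx : y = x := not_not.mp hy
      subst hyx
      simp
  have count : r * (q ^ (n - 1) - 1) = (q ^ n - 1) * lam := by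
    have lhs : (∑ j : Fin b, ∑ y : Fin (q ^ n),
        if x ∈ B j ∧ y ∈ B j ∧ y ≠ x then (1 : ℕ) else 0) = r * (q ^ (n - 1) - 1) := by
      simp only [key1]
      rw [← Finset.sum_filter, Finset.sum_const, smul_eq_mul, blocks_through hres x]
    have rhs : (∑ y : Fin (q ^ n), ∑ j : Fin b,
        if x ∈ B j ∧ y ∈ B j ∧ y ≠ x then (1 : ℕ) else 0) = (q ^ n - 1) * lam := by
      simp only [key2]
      rw [← Finset.sum_filter, Finset.sum_const, smul_eq_mul]
      have : (Finset.univ.filter fun y : Fin (q ^ n) => y ≠ x) = Finset.univ.erase x := by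
        ext y; simp [Finset.mem_erase]
      rw [this, Finset.card_erase_of_mem (Finset.mem_univ x), Finset.card_univ,
        Fintype.card_fin]
    rw [← lhs, Finset.sum_comm, rhs]
  -- now algebra
  have hlampos : 0 < lam := by
    rcases Nat.eq_zero_or_pos lam with h | h
    · exfalso; rw [h, zero_mul] at hlam; omega
    · exact h
  have hfac : 0 < lam * (q - 1) := by rw [hlam]; omega
  have e1 : r * (lam * (q - 1)) = (q ^ n - 1) * lam := by rw [hlam]; exact count
  have e2 : (lam + q ^ (n - 1)) * (lam * (q - 1)) = (q ^ n - 1) * lam := by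
    have : (lam + q ^ (n - 1)) * (q - 1) = q ^ n - 1 := by
      rw [Nat.add_mul, hlam, Nat.mul_sub, mul_one, hkv]
      omega
    calc (lam + q ^ (n - 1)) * (lam * (q - 1))
        = ((lam + q ^ (n - 1)) * (q - 1)) * lam := by ring
      _ = (q ^ n - 1) * lam := by rw [this]
  exact Nat.eq_of_mul_eq_mul_right hfac (e1.trans e2.symm)


lemma lam_pos {q n lam : ℕ} (hq4 : 4 ≤ q) (hn : 2 ≤ n)
    (hlam : lam * (q - 1) = q ^ (n - 1) - 1) : 0 < lam := by
  have hk : q ≤ q ^ (n - 1) := Nat.le_self_pow (by omega) q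
  rcases Nat.eq_zero_or_pos lam with h | h
  · exfalso; rw [h, zero_mul] at hlam; omega
  · exact h

lemma two_lam_lt {q n lam : ℕ} (hq4 : 4 ≤ q) (hn : 2 ≤ n)
    (hlam : lam * (q - 1) = q ^ (n - 1) - 1) : 2 * lam < q ^ (n - 1) := by
  have hk : q ≤ q ^ (n - 1) := Nat.le_self_pow (by omega) q
  have h1 : 0 < lam := lam_pos hq4 hn hlam
  have h3 : 3 * lam ≤ lam * (q - 1) := by
    have : 3 ≤ q - 1 := by omega
    calc 3 * lam = lam * 3 := by ring
      _ ≤ lam * (q - 1) := Nat.mul_le_mul_left lam this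
  omega

lemma exists_avoid {q n lam b r : ℕ} (hq4 : 4 ≤ q) (hn : 2 ≤ n)
    (B : Fin b → Finset (Fin (q ^ n)))
    (hsize : ∀ j, (B j).card = q ^ (n - 1))
    (hlam : lam * (q - 1) = q ^ (n - 1) - 1)
    (hpair : ∀ x y : Fin (q ^ n), x ≠ y →
      (Finset.univ.filter fun j => x ∈ B j ∧ y ∈ B j).card = lam)
    (res : Fin b → Fin r)
    (hres : ∀ (c : Fin r) (x : Fin (q ^ n)), ∃! j, res j = c ∧ x ∈ B j)
    (b0 : Fin b) (u : Fin (q ^ n)) (hu : u ∈ B b0)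
    (s : Finset (Fin (q ^ n))) (hs : ∀ w ∈ s, w ∈ B b0) (hus : u ∉ s)
    (hcard : s.card ≤ 3) :
    ∃ j, res j ≠ res b0 ∧ u ∈ B j ∧ ∀ w ∈ s, w ∉ B j := by
  classical
  have hr : r = lam + q ^ (n - 1) := r_identity hq4 hn B hsize hlam hpair res hres
  have hlam1 : 0 < lam := lam_pos hq4 hn hlam
  have h2l : 2 * lam < q ^ (n - 1) := two_lam_lt hq4 hn hlam
  set T := Finset.univ.filter fun j => u ∈ B j ∧ res j ≠ res b0 with hTdef
  have hT : T.card = r - 1 := card_through_nonpar hres hu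
  set bad := T.filter fun j => ∃ w ∈ s, w ∈ B j with hbaddef
  have hbadsub : bad ⊆ s.biUnion fun w =>
      Finset.univ.filter fun j => (u ∈ B j ∧ w ∈ B j) ∧ res j ≠ res b0 := by
    intro j hj
    simp only [hbaddef, Finset.mem_filter, hTdef, Finset.mem_univ, true_and] at hj
    obtain ⟨⟨hju, hjr⟩, w, hws, hwj⟩ := hj
    refine Finset.mem_biUnion.2 ⟨w, hws, ?_⟩
    simp only [Finset.mem_filter, Finset.mem_univ, true_and]
    exact ⟨⟨hju, hwj⟩, hjr⟩
  have hbadcard : bad.card ≤ 3 * (lam - 1) := by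
    calc bad.card ≤ ∑ w ∈ s, (Finset.univ.filter
          fun j => (u ∈ B j ∧ w ∈ B j) ∧ res j ≠ res b0).card :=
        le_trans (Finset.card_le_card hbadsub) (Finset.card_biUnion_le)
      _ = ∑ w ∈ s, (lam - 1) := by
          refine Finset.sum_congr rfl fun w hw => ?_
          exact card_pair_nonpar hpair hres (fun h => hus (h ▸ hw)) hu (hs w hw)
      _ = s.card * (lam - 1) := by rw [Finset.sum_const, smul_eq_mul]
      _ ≤ 3 * (lam - 1) := Nat.mul_le_mul_right _ hcard
  have hlt : bad.card < T.card := by rw [hT]; omega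
  have hgoodne : (T \ bad).Nonempty := by
    have hbT : bad ⊆ T := Finset.filter_subset _ T
    rw [← Finset.card_pos, Finset.card_sdiff_of_subset hbT]
    omega
  obtain ⟨j, hj⟩ := hgoodne
  rw [Finset.mem_sdiff] at hj
  obtain ⟨hjT, hjbad⟩ := hj
  simp only [hTdef, Finset.mem_filter, Finset.mem_univ, true_and] at hjT
  refine ⟨j, hjT.2, hjT.1, fun w hw hwj => hjbad ?_⟩
  simp only [hbaddef, Finset.mem_filter]
  exact ⟨by simp [hTdef, hjT.1, hjT.2], ⟨w, hw, hwj⟩⟩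


lemma weight_count {q n lam b r : ℕ} (hq4 : 4 ≤ q) (hn : 2 ≤ n)
    (B : Fin b → Finset (Fin (q ^ n)))
    (hsize : ∀ j, (B j).card = q ^ (n - 1))
    (hlam : lam * (q - 1) = q ^ (n - 1) - 1)
    (hpair : ∀ x y : Fin (q ^ n), x ≠ y →
      (Finset.univ.filter fun j => x ∈ B j ∧ y ∈ B j).card = lam)
    (res : Fin b → Fin r)
    (hres : ∀ (c : Fin r) (x : Fin (q ^ n)), ∃! j, res j = c ∧ x ∈ B j)
    (b0 : Fin b) {u w : Fin (q ^ n)} (huw : u ≠ w) (hu : u ∈ B b0) (hw : w ∈ B b0) :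
    (Finset.univ.filter fun j =>
      ((u ∈ B j ∧ w ∉ B j) ∨ (w ∈ B j ∧ u ∉ B j)) ∧ res j ≠ res b0).card
      = 2 * q ^ (n - 1) := by
  classical
  have hr : r = lam + q ^ (n - 1) := r_identity hq4 hn B hsize hlam hpair res hres
  have hlam1 : 0 < lam := lam_pos hq4 hn hlam
  have honly : ∀ u' w' : Fin (q ^ n), u' ≠ w' → u' ∈ B b0 → w' ∈ B b0 →
      (Finset.univ.filter fun j => (u' ∈ B j ∧ w' ∉ B j) ∧ res j ≠ res b0).card
        = q ^ (n - 1) := by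
    intro u' w' huw' hu' hw'
    have hsplit := Finset.card_filter_add_card_filter_not
      (s := Finset.univ.filter fun j => u' ∈ B j ∧ res j ≠ res b0)
      (p := fun j => w' ∈ B j)
    have e1 : ((Finset.univ.filter fun j => u' ∈ B j ∧ res j ≠ res b0).filter
        fun j => w' ∈ B j)
        = Finset.univ.filter fun j => (u' ∈ B j ∧ w' ∈ B j) ∧ res j ≠ res b0 := by
      rw [Finset.filter_filter]
      apply Finset.filter_congr; intro j _; tauto
    have e2 : ((Finset.univ.filter fun j => u' ∈ B j ∧ res j ≠ res b0).filter
        fun j => ¬ w' ∈ B j)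
        = Finset.univ.filter fun j => (u' ∈ B j ∧ w' ∉ B j) ∧ res j ≠ res b0 := by
      rw [Finset.filter_filter]
      apply Finset.filter_congr; intro j _; tauto
    rw [e1, e2, card_pair_nonpar hpair hres huw' hu' hw',
      card_through_nonpar hres hu'] at hsplit
    omega
  have hunion : (Finset.univ.filter fun j =>
      ((u ∈ B j ∧ w ∉ B j) ∨ (w ∈ B j ∧ u ∉ B j)) ∧ res j ≠ res b0)
      = (Finset.univ.filter fun j => (u ∈ B j ∧ w ∉ B j) ∧ res j ≠ res b0)
        ∪ (Finset.univ.filter fun j => (w ∈ B j ∧ u ∉ B j) ∧ res j ≠ res b0) := by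
    ext j
    simp only [Finset.mem_filter, Finset.mem_univ, true_and, Finset.mem_union]
    tauto
  have hdisj : Disjoint
      (Finset.univ.filter fun j => (u ∈ B j ∧ w ∉ B j) ∧ res j ≠ res b0)
      (Finset.univ.filter fun j => (w ∈ B j ∧ u ∉ B j) ∧ res j ≠ res b0) := by
    rw [Finset.disjoint_filter]
    intro j _ h1 h2
    exact h2.1.2 h1.1.1
  rw [hunion, Finset.card_union_of_disjoint hdisj, honly u w huw hu hw,
    honly w u (Ne.symm huw) hw hu]
  omega


section Span

variable {p : ℕ} {v b r : ℕ}

/-- The row of the incidence matrix corresponding to a point. -/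
private def RowV (p : ℕ) {v b : ℕ} (B : Fin b → Finset (Fin v)) (x : Fin v) :
    Fin b → ZMod p :=
  fun j => if x ∈ B j then 1 else 0

private lemma class_sum {B : Fin b → Finset (Fin v)} {res : Fin b → Fin r}
    (hres : ∀ (c : Fin r) (x : Fin v), ∃! j, res j = c ∧ x ∈ B j)
    (c : Fin r) (x : Fin v) :
    ∑ j ∈ Finset.univ.filter (fun j => res j = c), RowV p B x j = 1 := by
  classical
  obtain ⟨j₀, h1, h2, hset⟩ := filter_class_eq hres c x
  have h3 : (Finset.univ.filter fun j => res j = c).filter (fun j => x ∈ B j) = {j₀} := by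
    rw [Finset.filter_filter, hset]
  have h4 : ∑ j ∈ Finset.univ.filter (fun j => res j = c), RowV p B x j
      = (((Finset.univ.filter fun j => res j = c).filter (fun j => x ∈ B j)).card :
          ZMod p) :=
    Finset.sum_boole _ _
  rw [h4, h3, Finset.card_singleton, Nat.cast_one]

private lemma comb_class_sum {B : Fin b → Finset (Fin v)} {res : Fin b → Fin r}
    (hres : ∀ (c : Fin r) (x : Fin v), ∃! j, res j = c ∧ x ∈ B j)
    (b0 : Fin b) (a : {x : Fin v // x ∉ B b0} → ZMod p) (c : Fin r) :
    ∑ j ∈ Finset.univ.filter (fun j => res j = c),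
      (∑ x : {x : Fin v // x ∉ B b0}, a x • RowV p B x.1) j
      = ∑ x : {x : Fin v // x ∉ B b0}, a x := by
  classical
  have : ∀ j, (∑ x : {x : Fin v // x ∉ B b0}, a x • RowV p B x.1) j
      = ∑ x : {x : Fin v // x ∉ B b0}, a x * RowV p B x.1 j := by
    intro j
    rw [Finset.sum_apply]
    simp [Pi.smul_apply, smul_eq_mul]
  simp only [this]
  rw [Finset.sum_comm]
  refine Finset.sum_congr rfl fun x _ => ?_
  rw [← Finset.mul_sum, class_sum hres c x.1, mul_one]

private lemma comb_b0 {B : Fin b → Finset (Fin v)}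
    (b0 : Fin b) (a : {x : Fin v // x ∉ B b0} → ZMod p) :
    (∑ x : {x : Fin v // x ∉ B b0}, a x • RowV p B x.1) b0 = 0 := by
  classical
  rw [Finset.sum_apply]
  refine Finset.sum_eq_zero fun x _ => ?_
  have : RowV p B x.1 b0 = 0 := if_neg x.2
  simp [Pi.smul_apply, this]

private lemma row_b0 {B : Fin b → Finset (Fin v)} {b0 : Fin b} {z : Fin v}
    (hz : z ∈ B b0) : RowV p B z b0 = 1 := if_pos hz

end Span


private lemma key_span [Fact p.Prime] (B : Fin b → Finset (Fin v)) (res : Fin b → Fin r)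
    (b0 : Fin b)
    (hemb : (Matrix.of fun (i : Fin v) (j : Fin b) =>
        if i ∈ B j then (1 : ZMod p) else 0).rank
      = (Matrix.of fun (i : {x : Fin v // x ∉ B b0}) (j : {j : Fin b // j ≠ b0}) =>
        if (i : Fin v) ∈ B (j : Fin b) then (1 : ZMod p) else 0).rank + 1)
    {u w : Fin v} (hu : u ∈ B b0) (hw : w ∈ B b0) :
    RowV p B u - RowV p B w ∈
      Submodule.span (ZMod p)
        (Set.range fun x : {x : Fin v // x ∉ B b0} => RowV p B x.1) := by
  classical
  by_contra hne
  set W1 := Submodule.span (ZMod p)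
    (Set.range fun x : {x : Fin v // x ∉ B b0} => RowV p B x.1) with hW1
  set Wfull := Submodule.span (ZMod p) (Set.range fun x : Fin v => RowV p B x) with hWf
  have hu1 : RowV p B u ∉ W1 := by
    intro hmem
    obtain ⟨a, ha⟩ := (Submodule.mem_span_range_iff_exists_fun (ZMod p)).1 hmem
    have h0 := congrFun ha b0
    rw [comb_b0, row_b0 hu] at h0
    exact one_ne_zero h0.symm
  have hw2 : RowV p B w ∉ W1 ⊔ Submodule.span (ZMod p) {RowV p B u} := by
    intro hmem
    rw [Submodule.mem_sup] at hmem
    obtain ⟨y, hy, z, hz, hyz⟩ := hmem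
    rw [Submodule.mem_span_singleton] at hz
    obtain ⟨α, rfl⟩ := hz
    obtain ⟨a, ha⟩ := (Submodule.mem_span_range_iff_exists_fun (ZMod p)).1 hy
    have hb0 := congrFun hyz b0
    rw [Pi.add_apply, Pi.smul_apply, row_b0 hw, row_b0 hu, ← ha, comb_b0] at hb0
    have hα : α = 1 := by simpa using hb0
    subst hα
    apply hne
    have heq : RowV p B u - RowV p B w = -y := by
      rw [← hyz]; ext j; simp
    rw [heq]
    exact neg_mem hy
  have hle1 : W1 ≤ Wfull := by
    rw [hW1, hWf]
    refine Submodule.span_le.2 ?_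
    rintro _ ⟨x, rfl⟩
    exact Submodule.subset_span ⟨x.1, rfl⟩
  have hmemu : RowV p B u ∈ Wfull := by
    rw [hWf]; exact Submodule.subset_span ⟨u, rfl⟩
  have hmemw : RowV p B w ∈ Wfull := by
    rw [hWf]; exact Submodule.subset_span ⟨w, rfl⟩
  have hlt1 : W1 < W1 ⊔ Submodule.span (ZMod p) {RowV p B u} := by
    refine lt_of_le_of_ne le_sup_left fun h => hu1 ?_
    rw [h]
    exact Submodule.mem_sup_right (Submodule.mem_span_singleton_self _)
  have hlt2 : W1 ⊔ Submodule.span (ZMod p) {RowV p B u}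
      < (W1 ⊔ Submodule.span (ZMod p) {RowV p B u})
        ⊔ Submodule.span (ZMod p) {RowV p B w} := by
    refine lt_of_le_of_ne le_sup_left fun h => hw2 ?_
    rw [h]
    exact Submodule.mem_sup_right (Submodule.mem_span_singleton_self _)
  have hle3 : (W1 ⊔ Submodule.span (ZMod p) {RowV p B u})
      ⊔ Submodule.span (ZMod p) {RowV p B w} ≤ Wfull :=
    sup_le (sup_le hle1 ((Submodule.span_singleton_le_iff_mem _ _).2 hmemu))
      ((Submodule.span_singleton_le_iff_mem _ _).2 hmemw)
  have f1 : Module.finrank (ZMod p) ↥W1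
      < Module.finrank (ZMod p) ↥(W1 ⊔ Submodule.span (ZMod p) {RowV p B u}) :=
    Submodule.finrank_lt_finrank_of_lt hlt1
  have f2 : Module.finrank (ZMod p) ↥(W1 ⊔ Submodule.span (ZMod p) {RowV p B u})
      < Module.finrank (ZMod p) ↥((W1 ⊔ Submodule.span (ZMod p) {RowV p B u})
        ⊔ Submodule.span (ZMod p) {RowV p B w}) :=
    Submodule.finrank_lt_finrank_of_lt hlt2
  have f3 : Module.finrank (ZMod p) ↥((W1 ⊔ Submodule.span (ZMod p) {RowV p B u})
        ⊔ Submodule.span (ZMod p) {RowV p B w}) ≤ Module.finrank (ZMod p) ↥Wfull :=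
    Submodule.finrank_mono hle3
  have hMfull : (Matrix.of fun (i : Fin v) (j : Fin b) =>
      if i ∈ B j then (1 : ZMod p) else 0).rank = Module.finrank (ZMod p) ↥Wfull := by
    rw [Matrix.rank_eq_finrank_span_row]
    rfl
  have hMB : (Matrix.of fun (i : {x : Fin v // x ∉ B b0}) (j : {j : Fin b // j ≠ b0}) =>
      if (i : Fin v) ∈ B (j : Fin b) then (1 : ZMod p) else 0).rank
      ≤ Module.finrank (ZMod p) ↥W1 := by
    rw [Matrix.rank_eq_finrank_span_row]
    have hr : Set.range (Matrix.of fun (i : {x : Fin v // x ∉ B b0})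
          (j : {j : Fin b // j ≠ b0}) =>
        if (i : Fin v) ∈ B (j : Fin b) then (1 : ZMod p) else 0).row
        = (LinearMap.funLeft (ZMod p) (ZMod p)
            (Subtype.val : {j : Fin b // j ≠ b0} → Fin b)) ''
          (Set.range fun x : {x : Fin v // x ∉ B b0} => RowV p B x.1) := by
      rw [← Set.range_comp]
      rfl
    rw [hr, ← Submodule.map_span, hW1]
    exact Submodule.finrank_map_le _ _
  rw [hMfull] at hemb
  omega


lemma card_subtype_filter {b : ℕ} (qp : Fin b → Prop) [DecidablePred qp]
    (P : Fin b → Prop) [DecidablePred P] :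
    (Finset.univ.filter fun j : {j : Fin b // qp j} => P j.1).card
      = (Finset.univ.filter fun j : Fin b => P j ∧ qp j).card := by
  refine Finset.card_bij (fun j _ => j.1) ?_ ?_ ?_
  · intro j hj
    simp only [Finset.mem_filter, Finset.mem_univ, true_and] at hj ⊢
    exact ⟨hj, j.2⟩
  · intro j1 _ j2 _ h
    exact Subtype.ext h
  · intro j hj
    simp only [Finset.mem_filter, Finset.mem_univ, true_and] at hj
    exact ⟨⟨j, hj.2⟩, by simp [hj.1], rfl⟩

lemma card_lt_pairs {α : Type*} [LinearOrder α] [DecidableEq α] (s : Finset α) :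
    ((s ×ˢ s).filter fun e => e.1 < e.2).card = s.card.choose 2 := by
  classical
  have hswap : ((s ×ˢ s).filter fun e => e.2 < e.1).card
      = ((s ×ˢ s).filter fun e => e.1 < e.2).card := by
    refine Finset.card_bij (fun e _ => (e.2, e.1)) ?_ ?_ ?_
    · intro e he
      simp only [Finset.mem_filter, Finset.mem_product] at he ⊢
      exact ⟨⟨he.1.2, he.1.1⟩, he.2⟩
    · intro e1 _ e2 _ h
      have h1 := congrArg Prod.fst h
      have h2 := congrArg Prod.snd h
      exact Prod.ext h2 h1
    · intro e he
      simp only [Finset.mem_filter, Finset.mem_product] at he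
      exact ⟨(e.2, e.1), by simp [Finset.mem_filter, Finset.mem_product, he.1.1, he.1.2, he.2], rfl⟩
  have hunion : ((s ×ˢ s).filter fun e => e.1 < e.2)
      ∪ ((s ×ˢ s).filter fun e => e.2 < e.1) = s.offDiag := by
    ext e
    simp only [Finset.mem_union, Finset.mem_filter, Finset.mem_product, Finset.mem_offDiag]
    constructor
    · rintro (⟨⟨h1, h2⟩, h3⟩ | ⟨⟨h1, h2⟩, h3⟩)
      · exact ⟨h1, h2, ne_of_lt h3⟩
      · exact ⟨h1, h2, (ne_of_lt h3).symm⟩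
    · rintro ⟨h1, h2, h3⟩
      rcases lt_or_gt_of_ne h3 with h | h
      · exact Or.inl ⟨⟨h1, h2⟩, h⟩
      · exact Or.inr ⟨⟨h1, h2⟩, h⟩
  have hdisj : Disjoint ((s ×ˢ s).filter fun e => e.1 < e.2)
      ((s ×ˢ s).filter fun e => e.2 < e.1) := by
    rw [Finset.disjoint_filter]
    intro e _ h1 h2
    exact absurd h2 (asymm h1)
  have hcard := Finset.card_union_of_disjoint hdisj
  rw [hunion, hswap, Finset.offDiag_card] at hcard
  have hmul : s.card * s.card - s.card = s.card * (s.card - 1) := by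
    rw [Nat.mul_sub, mul_one]
  rw [Nat.choose_two_right]
  omega

end ResEmb


/-- Theorem 5 of the paper: Let `D` be an affine resolvable
2-(qⁿ, q^{n-1}, (q^{n-1}-1)/(q-1)) design with a good block `B = B b0`, where
`q = p^t ≥ 4`, `p` prime, `n ≥ 2`. If the residual design `D_B` is linearly embeddable
over `GF(p)`, then the `GF(p)`-code spanned by the rows of the incidence matrix `M''`
of the substructure `D''` of `D_B` (the blocks of size `q^{n-1} - q^{n-2}`, i.e. the
residuals of blocks not parallel to `B`) contains at least `(p-1)·C(q^{n-1},2)`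
codewords of weight `2q^{n-1}` whose supports are unions of parallel classes of the
resolution `R` of `D''` defined by `B` (blocks with equal trace on `B` are parallel). -/
theorem residual_embeddable_codewords (p t n q lam b r : ℕ) [Fact p.Prime]
    (hq : q = p ^ t) (hq4 : 4 ≤ q) (hn : 2 ≤ n)
    (B : Fin b → Finset (Fin (q ^ n)))
    (hsize : ∀ j, (B j).card = q ^ (n - 1))
    (hlam : lam * (q - 1) = q ^ (n - 1) - 1)
    (hpair : ∀ x y : Fin (q ^ n), x ≠ y →
      (Finset.univ.filter fun j => x ∈ B j ∧ y ∈ B j).card = lam)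
    (res : Fin b → Fin r)
    (hres : ∀ (c : Fin r) (x : Fin (q ^ n)), ∃! j, res j = c ∧ x ∈ B j)
    (b0 : Fin b)
    -- b0 is a good block: each nonempty trace on B b0 comes from exactly q blocks
    (hgood : ∀ j : Fin b, res j ≠ res b0 →
      (Finset.univ.filter fun j' =>
        res j' ≠ res b0 ∧ B j' ∩ B b0 = B j ∩ B b0).card = q)
    -- the residual design D_{B b0} is linearly embeddable over GF(p)
    (hemb : (Matrix.of fun (i : Fin (q ^ n)) (j : Fin b) =>
        if i ∈ B j then (1 : ZMod p) else 0).rank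
      = (Matrix.of fun (i : {x : Fin (q ^ n) // x ∉ B b0}) (j : {j : Fin b // j ≠ b0}) =>
        if (i : Fin (q ^ n)) ∈ B (j : Fin b) then (1 : ZMod p) else 0).rank + 1) :
    (p - 1) * Nat.choose (q ^ (n - 1)) 2 ≤
      Set.ncard { c : {j : Fin b // res j ≠ res b0} → ZMod p |
        c ∈ Submodule.span (ZMod p)
          (Set.range fun (x : {x : Fin (q ^ n) // x ∉ B b0}) =>
            fun j : {j : Fin b // res j ≠ res b0} =>
              if (x : Fin (q ^ n)) ∈ B (j : Fin b) then (1 : ZMod p) else 0) ∧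
        (Finset.univ.filter fun j => c j ≠ 0).card = 2 * q ^ (n - 1) ∧
        ∀ j j' : {j : Fin b // res j ≠ res b0},
          B (j : Fin b) ∩ B b0 = B (j' : Fin b) ∩ B b0 → (c j ≠ 0 ↔ c j' ≠ 0) } := by
  classical
  haveI : NeZero p := ⟨(Fact.out : p.Prime).ne_zero⟩
  -- notation
  set wv : Fin (q ^ n) → ({j : Fin b // res j ≠ res b0} → ZMod p) :=
    fun z => fun j => if z ∈ B j.1 then (1 : ZMod p) else 0 with hwv
  -- span membership for differences of rows of points of B b0
  have hspan : ∀ u w : Fin (q ^ n), u ∈ B b0 → w ∈ B b0 →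
      wv u - wv w ∈ Submodule.span (ZMod p)
        (Set.range fun (x : {x : Fin (q ^ n) // x ∉ B b0}) =>
          fun j : {j : Fin b // res j ≠ res b0} =>
            if (x : Fin (q ^ n)) ∈ B (j : Fin b) then (1 : ZMod p) else 0) := by
    intro u w hu hw
    have hfull := ResEmb.key_span (p := p) B res b0 hemb hu hw
    have h2 := Submodule.mem_map_of_mem
      (f := LinearMap.funLeft (ZMod p) (ZMod p)
        (Subtype.val : {j : Fin b // res j ≠ res b0} → Fin b)) hfull
    rw [Submodule.map_span, ← Set.range_comp] at h2
    exact h2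
  -- pointwise value of candidate codewords
  have hval : ∀ (α : (ZMod p)ˣ) (u w : Fin (q ^ n)) (j : {j : Fin b // res j ≠ res b0}),
      (((α : ZMod p) • (wv u - wv w)) j ≠ 0)
        ↔ ((u ∈ B j.1 ∧ w ∉ B j.1) ∨ (w ∈ B j.1 ∧ u ∉ B j.1)) := by
    intro α u w j
    have : ((α : ZMod p) • (wv u - wv w)) j
        = (α : ZMod p) * ((if u ∈ B j.1 then (1 : ZMod p) else 0)
            - (if w ∈ B j.1 then (1 : ZMod p) else 0)) := rfl
    rw [this]
    by_cases h1 : u ∈ B j.1 <;> by_cases h2 : w ∈ B j.1 <;>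
      simp [h1, h2, Units.ne_zero α, sub_eq_zero]
  -- the domain of the injection
  set P2 := {e : Fin (q ^ n) × Fin (q ^ n) //
    e.1 ∈ B b0 ∧ e.2 ∈ B b0 ∧ e.1 < e.2} with hP2
  set f : (ZMod p)ˣ × P2 → ({j : Fin b // res j ≠ res b0} → ZMod p) :=
    fun g => (g.1 : ZMod p) • (wv g.2.1.1 - wv g.2.1.2) with hf
  -- image is inside the set
  have himg : ∀ g, f g ∈ { c : {j : Fin b // res j ≠ res b0} → ZMod p |
        c ∈ Submodule.span (ZMod p)
          (Set.range fun (x : {x : Fin (q ^ n) // x ∉ B b0}) =>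
            fun j : {j : Fin b // res j ≠ res b0} =>
              if (x : Fin (q ^ n)) ∈ B (j : Fin b) then (1 : ZMod p) else 0) ∧
        (Finset.univ.filter fun j => c j ≠ 0).card = 2 * q ^ (n - 1) ∧
        ∀ j j' : {j : Fin b // res j ≠ res b0},
          B (j : Fin b) ∩ B b0 = B (j' : Fin b) ∩ B b0 → (c j ≠ 0 ↔ c j' ≠ 0) } := by
    rintro ⟨α, ⟨⟨u, w⟩, hu, hw, hlt⟩⟩
    have huw : u ≠ w := ne_of_lt hlt
    refine ⟨?_, ?_, ?_⟩
    · exact Submodule.smul_mem _ _ (hspan u w hu hw)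
    · -- weight
      have hfilter : (Finset.univ.filter fun j : {j : Fin b // res j ≠ res b0} =>
            f (α, ⟨(u, w), hu, hw, hlt⟩) j ≠ 0)
          = Finset.univ.filter fun j : {j : Fin b // res j ≠ res b0} =>
              ((u ∈ B j.1 ∧ w ∉ B j.1) ∨ (w ∈ B j.1 ∧ u ∉ B j.1)) := by
        apply Finset.filter_congr
        intro j _
        exact hval α u w j
      rw [hfilter, ResEmb.card_subtype_filter (fun j => res j ≠ res b0)
        (fun j => (u ∈ B j ∧ w ∉ B j) ∨ (w ∈ B j ∧ u ∉ B j))]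
      exact ResEmb.weight_count hq4 hn B hsize hlam hpair res hres b0 huw hu hw
    · -- support is union of parallel classes
      intro j j' htr
      have hiff : ∀ z, z ∈ B b0 → (z ∈ B j.1 ↔ z ∈ B j'.1) := by
        intro z hz
        constructor <;> intro h'
        · have h2 : z ∈ B j.1 ∩ B b0 := Finset.mem_inter.2 ⟨h', hz⟩
          rw [htr] at h2
          exact (Finset.mem_inter.1 h2).1
        · have h2 : z ∈ B j'.1 ∩ B b0 := Finset.mem_inter.2 ⟨h', hz⟩
          rw [← htr] at h2
          exact (Finset.mem_inter.1 h2).1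
      rw [hval α u w j, hval α u w j', hiff u hu, hiff w hw]
  -- injectivity
  have hkey : ∀ (γ δ : (ZMod p)ˣ) (u w u' w' : Fin (q ^ n)),
      u ∈ B b0 → w ∈ B b0 → u' ∈ B b0 → w' ∈ B b0 →
      (γ : ZMod p) • (wv u - wv w) = (δ : ZMod p) • (wv u' - wv w') →
      u ≠ w → u ≠ u' → u ≠ w' → False := by
    intro γ δ u w u' w' hu hw hu' hw' heq hne1 hne2 hne3
    obtain ⟨j, hj1, hj2, hj3⟩ := ResEmb.exists_avoid hq4 hn B hsize hlam hpair res hres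
      b0 u hu ({w, u', w'} : Finset (Fin (q ^ n)))
      (by intro z hz; simp only [Finset.mem_insert, Finset.mem_singleton] at hz
          rcases hz with rfl | rfl | rfl <;> assumption)
      (by simp only [Finset.mem_insert, Finset.mem_singleton]; push_neg
          exact ⟨hne1, hne2, hne3⟩)
      (by
        have h1 := Finset.card_insert_le w ({u', w'} : Finset (Fin (q ^ n)))
        have h2 := Finset.card_insert_le u' ({w'} : Finset (Fin (q ^ n)))
        have h3 : ({w'} : Finset (Fin (q ^ n))).card = 1 := Finset.card_singleton _
        omega)
    have hwj : w ∉ B j := hj3 w (by simp)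
    have hu'j : u' ∉ B j := hj3 u' (by simp)
    have hw'j : w' ∉ B j := hj3 w' (by simp)
    have := congrFun heq ⟨j, hj1⟩
    have hL : ((γ : ZMod p) • (wv u - wv w)) ⟨j, hj1⟩ = (γ : ZMod p) := by
      show (γ : ZMod p) * ((if u ∈ B j then (1 : ZMod p) else 0)
        - (if w ∈ B j then (1 : ZMod p) else 0)) = _
      rw [if_pos hj2, if_neg hwj]
      ring
    have hR : ((δ : ZMod p) • (wv u' - wv w')) ⟨j, hj1⟩ = 0 := by
      show (δ : ZMod p) * ((if u' ∈ B j then (1 : ZMod p) else 0)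
        - (if w' ∈ B j then (1 : ZMod p) else 0)) = _
      rw [if_neg hu'j, if_neg hw'j]
      ring
    rw [hL, hR] at this
    exact Units.ne_zero γ this
  have hkey2 : ∀ (γ δ : (ZMod p)ˣ) (u w u' w' : Fin (q ^ n)),
      u ∈ B b0 → w ∈ B b0 → u' ∈ B b0 → w' ∈ B b0 →
      (γ : ZMod p) • (wv u - wv w) = (δ : ZMod p) • (wv u' - wv w') →
      w ≠ u → w ≠ u' → w ≠ w' → False := by
    intro γ δ u w u' w' hu hw hu' hw' heq hne1 hne2 hne3
    have heq' : ((-γ : (ZMod p)ˣ) : ZMod p) • (wv w - wv u)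
        = ((-δ : (ZMod p)ˣ) : ZMod p) • (wv w' - wv u') := by
      ext j
      have := congrFun heq j
      simp only [Pi.smul_apply, Pi.sub_apply, smul_eq_mul, Units.val_neg] at this ⊢
      linear_combination this
    exact hkey (-γ) (-δ) w u w' u' hw hu hw' hu' heq' hne1 hne3 hne2
  have hinj : Function.Injective f := by
    rintro ⟨α, ⟨⟨u, w⟩, hu, hw, hlt⟩⟩ ⟨β, ⟨⟨u', w'⟩, hu', hw', hlt'⟩⟩ heq
    simp only [hf] at heq
    have huw : u ≠ w := ne_of_lt hlt
    have hu'w' : u' ≠ w' := ne_of_lt hlt'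
    -- u ∈ {u', w'}
    have hu_mem : u = u' ∨ u = w' := by
      by_contra hcon
      push_neg at hcon
      exact hkey α β u w u' w' hu hw hu' hw' heq huw hcon.1 hcon.2
    have hw_mem : w = u' ∨ w = w' := by
      by_contra hcon
      push_neg at hcon
      exact hkey2 α β u w u' w' hu hw hu' hw' heq (Ne.symm huw) hcon.1 hcon.2
    have huu' : u = u' ∧ w = w' := by
      rcases hu_mem with h1 | h1 <;> rcases hw_mem with h2 | h2
      · exact ⟨h1, by
          exfalso; apply huw; rw [h1, h2]⟩
      · exact ⟨h1, h2⟩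
      · exfalso
        subst h1; subst h2
        exact absurd (hlt.trans hlt') (lt_irrefl _)
      · exfalso; apply huw; rw [h1, h2]
    obtain ⟨h1, h2⟩ := huu'
    subst h1; subst h2
    -- now α = β
    obtain ⟨j, hj1, hj2, hj3⟩ := ResEmb.exists_avoid hq4 hn B hsize hlam hpair res hres
      b0 u hu ({w} : Finset (Fin (q ^ n)))
      (by intro z hz; simp only [Finset.mem_singleton] at hz; subst hz; exact hw)
      (by simpa using huw) (by simp)
    have hwj : w ∉ B j := hj3 w (by simp)
    have := congrFun heq ⟨j, hj1⟩
    have hL : ∀ ε : (ZMod p)ˣ, ((ε : ZMod p) • (wv u - wv w)) ⟨j, hj1⟩ = (ε : ZMod p) := by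
      intro ε
      show (ε : ZMod p) * ((if u ∈ B j then (1 : ZMod p) else 0)
        - (if w ∈ B j then (1 : ZMod p) else 0)) = _
      rw [if_pos hj2, if_neg hwj]
      ring
    rw [hL α, hL β] at this
    have : α = β := Units.ext this
    subst this
    rfl
  -- conclude by counting
  have hcount : Set.ncard (Set.range f) = (p - 1) * Nat.choose (q ^ (n - 1)) 2 := by
    rw [← Set.image_univ, Set.ncard_image_of_injective _ hinj, Set.ncard_univ,
      Nat.card_eq_fintype_card, Fintype.card_prod, ZMod.card_units]
    congr 1
    rw [Fintype.card_subtype]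
    have : (Finset.univ.filter fun e : Fin (q ^ n) × Fin (q ^ n) =>
        e.1 ∈ B b0 ∧ e.2 ∈ B b0 ∧ e.1 < e.2)
        = (B b0 ×ˢ B b0).filter fun e => e.1 < e.2 := by
      ext e
      simp only [Finset.mem_filter, Finset.mem_univ, true_and, Finset.mem_product]
      tauto
    rw [this, ResEmb.card_lt_pairs, hsize b0]
  rw [← hcount]
  refine Set.ncard_le_ncard ?_ (Set.toFinite _)
  rintro c ⟨g, rfl⟩
  exact himg g
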